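/- Every 3-dimensional nilpotent commutative Jordan ℝ-algebra J with J³ = 0 and dim J² = 1 (nilpotency type (2,1)) is isomorphic to exactly one of: J₂₄ (n₁² = n₂² = n₃), J₂₅ (n₁² = n₂, all others zero), or J₂₆ (n₁·n₂ = n₃), where unspecified products of basis elements are zero. -/

import Mathlib

/-- Multiplication of J₂₄: n₁² = n₂² = n₃, all other basis products zero. -/
def mulJ24 (x y : ℝ × ℝ × ℝ) : ℝ × ℝ × ℝ :=
  (0, 0, x.1 * y.1 + x.2.1 * y.2.1)

/-- Multiplication of J₂₅ = B₃ ⊕ ℝn₃: n₁² = n₂, all other basis products zero. -/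
def mulJ25 (x y : ℝ × ℝ × ℝ) : ℝ × ℝ × ℝ :=
  (0, x.1 * y.1, 0)

/-- Multiplication of J₂₆: n₁·n₂ = n₂·n₁ = n₃, all other basis products zero. -/
def mulJ26 (x y : ℝ × ℝ × ℝ) : ℝ × ℝ × ℝ :=
  (0, 0, x.1 * y.2.1 + x.2.1 * y.1)

/-- Isomorphism of an abstract algebra onto an algebra structure on ℝ³. -/
def IsoTo {J : Type*} [AddCommGroup J] [Module ℝ J]
    (mul : J →ₗ[ℝ] J →ₗ[ℝ] J)
    (m : (ℝ × ℝ × ℝ) → (ℝ × ℝ × ℝ) → (ℝ × ℝ × ℝ)) : Prop :=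
  ∃ φ : J ≃ₗ[ℝ] (ℝ × ℝ × ℝ), ∀ x y : J, φ (mul x y) = m (φ x) (φ y)

/-- Isomorphism of two algebra structures on ℝ³. -/
def AlgebrasIso (m₁ m₂ : (ℝ × ℝ × ℝ) → (ℝ × ℝ × ℝ) → (ℝ × ℝ × ℝ)) : Prop :=
  ∃ φ : (ℝ × ℝ × ℝ) ≃ₗ[ℝ] (ℝ × ℝ × ℝ), ∀ x y, φ (m₁ x y) = m₂ (φ x) (φ y)

noncomputable def eqR3 : (Fin 3 → ℝ) ≃ₗ[ℝ] ℝ × ℝ × ℝ where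
  toFun f := (f 0, f 1, f 2)
  invFun p := ![p.1, p.2.1, p.2.2]
  map_add' f g := rfl
  map_smul' c f := rfl
  left_inv f := by funext i; fin_cases i <;> rfl
  right_inv p := rfl

noncomputable def φR {J : Type*} [AddCommGroup J] [Module ℝ J]
    (b : Module.Basis (Fin 3) ℝ J) : J ≃ₗ[ℝ] ℝ × ℝ × ℝ :=
  b.equivFun.trans eqR3

lemma phiR_b {J : Type*} [AddCommGroup J] [Module ℝ J] (b : Module.Basis (Fin 3) ℝ J) :
    φR b (b 0) = (1,0,0) ∧ φR b (b 1) = (0,1,0) ∧ φR b (b 2) = (0,0,1) := by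
  refine ⟨?_, ?_, ?_⟩ <;>
    simp [φR, LinearEquiv.trans_apply, Module.Basis.equivFun_self, show ∀ f : Fin 3 → ℝ, eqR3 f = (f 0, f 1, f 2) from fun f => rfl, Prod.ext_iff]

noncomputable def M24 : (ℝ×ℝ×ℝ) →ₗ[ℝ] (ℝ×ℝ×ℝ) →ₗ[ℝ] (ℝ×ℝ×ℝ) :=
  LinearMap.mk₂ ℝ mulJ24
    (fun x x' y => by simp [mulJ24, Prod.ext_iff]; ring)
    (fun c x y => by simp [mulJ24, Prod.ext_iff]; ring)
    (fun x y y' => by simp [mulJ24, Prod.ext_iff]; ring)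
    (fun c x y => by simp [mulJ24, Prod.ext_iff]; ring)

noncomputable def M25 : (ℝ×ℝ×ℝ) →ₗ[ℝ] (ℝ×ℝ×ℝ) →ₗ[ℝ] (ℝ×ℝ×ℝ) :=
  LinearMap.mk₂ ℝ mulJ25
    (fun x x' y => by simp [mulJ25, Prod.ext_iff]; ring)
    (fun c x y => by simp [mulJ25, Prod.ext_iff]; ring)
    (fun x y y' => by simp [mulJ25, Prod.ext_iff]; ring)
    (fun c x y => by simp [mulJ25, Prod.ext_iff]; ring)

noncomputable def M26 : (ℝ×ℝ×ℝ) →ₗ[ℝ] (ℝ×ℝ×ℝ) →ₗ[ℝ] (ℝ×ℝ×ℝ) :=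
  LinearMap.mk₂ ℝ mulJ26
    (fun x x' y => by simp [mulJ26, Prod.ext_iff]; ring)
    (fun c x y => by simp [mulJ26, Prod.ext_iff]; ring)
    (fun x y y' => by simp [mulJ26, Prod.ext_iff]; ring)
    (fun c x y => by simp [mulJ26, Prod.ext_iff]; ring)

lemma basis_of_matrix {J : Type*} [AddCommGroup J] [Module ℝ J]
    (v : Module.Basis (Fin 3) ℝ J) (A : Matrix (Fin 3) (Fin 3) ℝ) (hA : IsUnit A.det) :
    ∃ b : Module.Basis (Fin 3) ℝ J, ∀ j, b j = ∑ i, A i j • v i := by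
  refine ⟨v.map (LinearEquiv.ofLinear (Matrix.toLin v v A) (Matrix.toLin v v A⁻¹)
    (by rw [← Matrix.toLin_mul, Matrix.mul_nonsing_inv _ hA, Matrix.toLin_one])
    (by rw [← Matrix.toLin_mul, Matrix.nonsing_inv_mul _ hA, Matrix.toLin_one])), ?_⟩
  intro j
  simp [Module.Basis.map_apply, LinearEquiv.ofLinear_apply, Matrix.toLin_self]

lemma isoTo_of_table {J : Type*} [AddCommGroup J] [Module ℝ J]
    (mul : J →ₗ[ℝ] J →ₗ[ℝ] J)
    (m : (ℝ×ℝ×ℝ) → (ℝ×ℝ×ℝ) → (ℝ×ℝ×ℝ))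
    (M : (ℝ×ℝ×ℝ) →ₗ[ℝ] (ℝ×ℝ×ℝ) →ₗ[ℝ] (ℝ×ℝ×ℝ)) (hMm : ∀ x y, M x y = m x y)
    (b : Module.Basis (Fin 3) ℝ J)
    (h00 : φR b (mul (b 0) (b 0)) = m (φR b (b 0)) (φR b (b 0)))
    (h01 : φR b (mul (b 0) (b 1)) = m (φR b (b 0)) (φR b (b 1)))
    (h02 : φR b (mul (b 0) (b 2)) = m (φR b (b 0)) (φR b (b 2)))
    (h10 : φR b (mul (b 1) (b 0)) = m (φR b (b 1)) (φR b (b 0)))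
    (h11 : φR b (mul (b 1) (b 1)) = m (φR b (b 1)) (φR b (b 1)))
    (h12 : φR b (mul (b 1) (b 2)) = m (φR b (b 1)) (φR b (b 2)))
    (h20 : φR b (mul (b 2) (b 0)) = m (φR b (b 2)) (φR b (b 0)))
    (h21 : φR b (mul (b 2) (b 1)) = m (φR b (b 2)) (φR b (b 1)))
    (h22 : φR b (mul (b 2) (b 2)) = m (φR b (b 2)) (φR b (b 2))) :
    IsoTo mul m := by
  refine ⟨φR b, ?_⟩
  have key : mul.compr₂ ((φR b) : J →ₗ[ℝ] ℝ×ℝ×ℝ) =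
      M.compl₁₂ ((φR b) : J →ₗ[ℝ] ℝ×ℝ×ℝ) ((φR b) : J →ₗ[ℝ] ℝ×ℝ×ℝ) := by
    apply b.ext; intro i; apply b.ext; intro j
    simp only [LinearMap.compr₂_apply, LinearMap.compl₁₂_apply, LinearEquiv.coe_coe]
    rw [hMm]
    fin_cases i <;> fin_cases j
    exacts [h00, h01, h02, h10, h11, h12, h20, h21, h22]
  intro x y
  have h := LinearMap.congr_fun (LinearMap.congr_fun key x) y
  simp only [LinearMap.compr₂_apply, LinearMap.compl₁₂_apply, LinearEquiv.coe_coe] at h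
  rw [h, hMm]

lemma repr_mul_diag {J : Type*} [AddCommGroup J] [Module ℝ J]
    (Bf : J →ₗ[ℝ] J →ₗ[ℝ] ℝ) (v : Module.Basis (Fin 3) ℝ J)
    (hortho : ∀ i j : Fin 3, i ≠ j → Bf (v i) (v j) = 0) (e : J) (j : Fin 3) :
    Bf e (v j) = v.repr e j * Bf (v j) (v j) := by
  conv_lhs => rw [← v.sum_repr e]
  rw [map_sum, LinearMap.sum_apply]
  rw [Finset.sum_eq_single j]
  · simp
  · intro i _ hij
    simp [hortho i j hij]
  · intro hj; simp at hj

lemma caseA {J : Type*} [AddCommGroup J] [Module ℝ J]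
    (mul : J →ₗ[ℝ] J →ₗ[ℝ] J) (Bf : J →ₗ[ℝ] J →ₗ[ℝ] ℝ) (e : J)
    (hBe : ∀ x y, mul x y = Bf x y • e) (he0 : e ≠ 0)
    (hradl : ∀ y, Bf e y = 0) (hradr : ∀ y, Bf y e = 0)
    (v : Module.Basis (Fin 3) ℝ J)
    (hortho : ∀ i j : Fin 3, i ≠ j → Bf (v i) (v j) = 0)
    (hd0 : Bf (v 0) (v 0) ≠ 0) (hd1 : Bf (v 1) (v 1) = 0) (hd2 : Bf (v 2) (v 2) = 0) :
    IsoTo mul mulJ25 := by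
  have me : ∀ x, mul x e = 0 := fun x => by rw [hBe, hradr, zero_smul]
  have me' : ∀ y, mul e y = 0 := fun y => by rw [hBe, hradl, zero_smul]
  set d0 := Bf (v 0) (v 0) with hd0def
  set c : Fin 3 → ℝ := fun i => v.repr e i with hcdef
  have hc0 : c 0 = 0 := by
    have h := repr_mul_diag Bf v hortho e 0
    rw [hradl] at h
    exact (mul_eq_zero.mp h.symm).resolve_right hd0
  have he12 : e = c 1 • v 1 + c 2 • v 2 := by
    conv_lhs => rw [← v.sum_repr e]
    rw [Fin.sum_univ_three]
    rw [show v.repr e 0 = c 0 from rfl, hc0, zero_smul, zero_add]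
  have hcne : c 1 ≠ 0 ∨ c 2 ≠ 0 := by
    by_contra h
    push_neg at h
    exact he0 (by rw [he12, h.1, h.2, zero_smul, zero_smul, add_zero])
  obtain ⟨b, hb0, hb1, hb2a, hb2b, hb2c⟩ :
      ∃ b : Module.Basis (Fin 3) ℝ J, b 0 = v 0 ∧ b 1 = d0 • e ∧
        Bf (v 0) (b 2) = 0 ∧ Bf (b 2) (v 0) = 0 ∧ Bf (b 2) (b 2) = 0 := by
    rcases hcne with h1 | h2
    · obtain ⟨b, hb⟩ := basis_of_matrix v !![1,0,0; 0, d0*c 1, 0; 0, d0*c 2, 1]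
        (by
          have hdet : (!![1,0,0; 0, d0*c 1, 0; 0, d0*c 2, 1]).det = d0 * c 1 := by
            simp [Matrix.det_fin_three]
          rw [hdet]
          exact isUnit_iff_ne_zero.mpr (mul_ne_zero hd0 h1))
      refine ⟨b, ?_, ?_, ?_, ?_, ?_⟩
      · rw [hb]
        simp [Fin.sum_univ_three, Matrix.cons_val_zero, Matrix.cons_val_one,
          Matrix.head_cons, Matrix.cons_val_two, Matrix.tail_cons, Matrix.vecHead, Matrix.vecTail]
      · rw [hb, he12]
        simp [Fin.sum_univ_three, Matrix.cons_val_zero, Matrix.cons_val_one,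
          Matrix.head_cons, Matrix.cons_val_two, Matrix.tail_cons, Matrix.vecHead, Matrix.vecTail, smul_smul, smul_add]
      · rw [hb]
        simp [Fin.sum_univ_three, Matrix.cons_val_zero, Matrix.cons_val_one,
          Matrix.head_cons, Matrix.cons_val_two, Matrix.tail_cons, Matrix.vecHead, Matrix.vecTail]
        exact hortho 0 2 (by decide)
      · rw [hb]
        simp [Fin.sum_univ_three, Matrix.cons_val_zero, Matrix.cons_val_one,
          Matrix.head_cons, Matrix.cons_val_two, Matrix.tail_cons, Matrix.vecHead, Matrix.vecTail]
        exact hortho 2 0 (by decide)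
      · rw [hb]
        simp [Fin.sum_univ_three, Matrix.cons_val_zero, Matrix.cons_val_one,
          Matrix.head_cons, Matrix.cons_val_two, Matrix.tail_cons, Matrix.vecHead, Matrix.vecTail]
        exact hd2
    · obtain ⟨b, hb⟩ := basis_of_matrix v !![1,0,0; 0, d0*c 1, 1; 0, d0*c 2, 0]
        (by
          have hdet : (!![1,0,0; 0, d0*c 1, 1; 0, d0*c 2, 0]).det = -(d0 * c 2) := by
            simp [Matrix.det_fin_three]
          rw [hdet]
          exact isUnit_iff_ne_zero.mpr (neg_ne_zero.mpr (mul_ne_zero hd0 h2)))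
      refine ⟨b, ?_, ?_, ?_, ?_, ?_⟩
      · rw [hb]
        simp [Fin.sum_univ_three, Matrix.cons_val_zero, Matrix.cons_val_one,
          Matrix.head_cons, Matrix.cons_val_two, Matrix.tail_cons, Matrix.vecHead, Matrix.vecTail]
      · rw [hb, he12]
        simp [Fin.sum_univ_three, Matrix.cons_val_zero, Matrix.cons_val_one,
          Matrix.head_cons, Matrix.cons_val_two, Matrix.tail_cons, Matrix.vecHead, Matrix.vecTail, smul_smul, smul_add]
      · rw [hb]
        simp [Fin.sum_univ_three, Matrix.cons_val_zero, Matrix.cons_val_one,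
          Matrix.head_cons, Matrix.cons_val_two, Matrix.tail_cons, Matrix.vecHead, Matrix.vecTail]
        exact hortho 0 1 (by decide)
      · rw [hb]
        simp [Fin.sum_univ_three, Matrix.cons_val_zero, Matrix.cons_val_one,
          Matrix.head_cons, Matrix.cons_val_two, Matrix.tail_cons, Matrix.vecHead, Matrix.vecTail]
        exact hortho 1 0 (by decide)
      · rw [hb]
        simp [Fin.sum_univ_three, Matrix.cons_val_zero, Matrix.cons_val_one,
          Matrix.head_cons, Matrix.cons_val_two, Matrix.tail_cons, Matrix.vecHead, Matrix.vecTail]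
        exact hd1
  obtain ⟨hφ0, hφ1, hφ2⟩ := phiR_b b
  have t00 : mul (b 0) (b 0) = b 1 := by rw [hb0, hBe, hb1]
  have t01 : mul (b 0) (b 1) = 0 := by rw [hb1, map_smul, me, smul_zero]
  have t10 : mul (b 1) (b 0) = 0 := by
    rw [hb1, LinearMap.map_smul₂, me', smul_zero]
  have t11 : mul (b 1) (b 1) = 0 := by
    rw [hb1, LinearMap.map_smul₂, map_smul, me', smul_zero, smul_zero]
  have t02 : mul (b 0) (b 2) = 0 := by rw [hb0, hBe, hb2a, zero_smul]
  have t20 : mul (b 2) (b 0) = 0 := by rw [hb0, hBe, hb2b, zero_smul]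
  have t12 : mul (b 1) (b 2) = 0 := by
    rw [hb1, LinearMap.map_smul₂, me', smul_zero]
  have t21 : mul (b 2) (b 1) = 0 := by rw [hb1, map_smul, me, smul_zero]
  have t22 : mul (b 2) (b 2) = 0 := by rw [hBe, hb2c, zero_smul]
  apply isoTo_of_table mul mulJ25 M25 (fun x y => rfl) b <;>
    simp only [t00, t01, t10, t11, t02, t20, t12, t21, t22, hφ0, hφ1, hφ2, map_zero] <;>
    norm_num [mulJ25, Prod.ext_iff]
lemma caseB {J : Type*} [AddCommGroup J] [Module ℝ J]
    (mul : J →ₗ[ℝ] J →ₗ[ℝ] J) (Bf : J →ₗ[ℝ] J →ₗ[ℝ] ℝ) (e : J)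
    (hBe : ∀ x y, mul x y = Bf x y • e) (he0 : e ≠ 0)
    (hradl : ∀ y, Bf e y = 0) (hradr : ∀ y, Bf y e = 0)
    (v : Module.Basis (Fin 3) ℝ J)
    (hortho : ∀ i j : Fin 3, i ≠ j → Bf (v i) (v j) = 0)
    (hd0 : Bf (v 0) (v 0) ≠ 0) (hd1 : Bf (v 1) (v 1) ≠ 0) (hd2 : Bf (v 2) (v 2) = 0) :
    IsoTo mul mulJ24 ∨ IsoTo mul mulJ26 := by
  have me : ∀ x, mul x e = 0 := fun x => by rw [hBe, hradr, zero_smul]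
  have me' : ∀ y, mul e y = 0 := fun y => by rw [hBe, hradl, zero_smul]
  set d0 := Bf (v 0) (v 0) with hd0def
  set d1 := Bf (v 1) (v 1) with hd1def
  set c : Fin 3 → ℝ := fun i => v.repr e i with hcdef
  have hc0 : c 0 = 0 := by
    have h := repr_mul_diag Bf v hortho e 0
    rw [hradl] at h
    exact (mul_eq_zero.mp h.symm).resolve_right hd0
  have hc1 : c 1 = 0 := by
    have h := repr_mul_diag Bf v hortho e 1
    rw [hradl] at h
    exact (mul_eq_zero.mp h.symm).resolve_right hd1
  have he2 : e = c 2 • v 2 := by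
    conv_lhs => rw [← v.sum_repr e]
    rw [Fin.sum_univ_three]
    rw [show v.repr e 0 = c 0 from rfl, show v.repr e 1 = c 1 from rfl, hc0, hc1]
    simp; rfl
  have hc2 : c 2 ≠ 0 := by
    intro h
    exact he0 (by rw [he2, h, zero_smul])
  set s : ℝ := if 0 < d0 then 1 else -1 with hsdef
  have hs1 : s = 1 ∨ s = -1 := by
    by_cases h : 0 < d0 <;> simp [hsdef, h]
  have hss : s * s = 1 := by rcases hs1 with h | h <;> rw [h] <;> norm_num
  have hs0 : s ≠ 0 := by rcases hs1 with h | h <;> rw [h] <;> norm_num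
  have hsd0 : 0 < s * d0 := by
    by_cases h : 0 < d0
    · simp only [hsdef, if_pos h]; linarith
    · simp only [hsdef, if_neg h]
      have : d0 < 0 := lt_of_le_of_ne (not_lt.mp h) hd0
      linarith
  set a : ℝ := (Real.sqrt (s * d0))⁻¹ with hadef
  have hsq : Real.sqrt (s * d0) * Real.sqrt (s * d0) = s * d0 := Real.mul_self_sqrt hsd0.le
  have hsqne : Real.sqrt (s * d0) ≠ 0 := ne_of_gt (Real.sqrt_pos.mpr hsd0)
  have ha0 : a ≠ 0 := inv_ne_zero hsqne
  have ha1 : a * a * (s * d0) = 1 := by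
    rw [hadef, ← hsq]; field_simp; rw [Real.sq_sqrt hsd0.le, Real.sq_sqrt hsd0.le]
  have ha2 : a * a * d0 = s := by
    have key : s * (a * a * d0) = s * s := by linear_combination ha1 - hss
    exact mul_left_cancel₀ hs0 key
  -- helper for products of combinations of v0, v1
  have m00 : mul (v 0) (v 0) = d0 • e := by rw [hBe]
  have m11 : mul (v 1) (v 1) = d1 • e := by rw [hBe]
  have m01 : mul (v 0) (v 1) = 0 := by rw [hBe, hortho 0 1 (by decide), zero_smul]
  have m10 : mul (v 1) (v 0) = 0 := by rw [hBe, hortho 1 0 (by decide), zero_smul]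
  have key : ∀ p q p' q' : ℝ, mul (p • v 0 + q • v 1) (p' • v 0 + q' • v 1)
      = (p * p' * d0 + q * q' * d1) • e := by
    intro p q p' q'
    simp only [map_add, LinearMap.map_smul₂, map_smul, LinearMap.add_apply,
      LinearMap.smul_apply, m00, m11, m01, m10, smul_zero, add_zero, zero_add,
      smul_smul]
    rw [← add_smul]
    ring_nf
  by_cases hpos : 0 < s * d1
  · -- same sign: J24
    left
    set bb : ℝ := (Real.sqrt (s * d1))⁻¹ with hbdef
    have hsqb : Real.sqrt (s * d1) * Real.sqrt (s * d1) = s * d1 := Real.mul_self_sqrt hpos.le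
    have hsqbne : Real.sqrt (s * d1) ≠ 0 := ne_of_gt (Real.sqrt_pos.mpr hpos)
    have hb0 : bb ≠ 0 := inv_ne_zero hsqbne
    have hb1' : bb * bb * (s * d1) = 1 := by rw [hbdef, ← hsqb]; field_simp; rw [Real.sq_sqrt hpos.le, Real.sq_sqrt hpos.le]
    have hb2' : bb * bb * d1 = s := by
      have key2 : s * (bb * bb * d1) = s * s := by linear_combination hb1' - hss
      exact mul_left_cancel₀ hs0 key2
    obtain ⟨b, hb⟩ := basis_of_matrix v !![a,0,0; 0,bb,0; 0,0,s * c 2]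
      (by
        have hdet : (!![a,0,0; 0,bb,0; 0,0,s * c 2]).det = a * bb * (s * c 2) := by
          simp [Matrix.det_fin_three]
        rw [hdet]
        exact isUnit_iff_ne_zero.mpr
          (mul_ne_zero (mul_ne_zero ha0 hb0) (mul_ne_zero hs0 hc2)))
    have hb0e : b 0 = a • v 0 := by
      rw [hb]
      simp [Fin.sum_univ_three, Matrix.cons_val_zero, Matrix.cons_val_one,
        Matrix.head_cons, Matrix.cons_val_two, Matrix.tail_cons, Matrix.vecHead, Matrix.vecTail]
    have hb1e : b 1 = bb • v 1 := by
      rw [hb]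
      simp [Fin.sum_univ_three, Matrix.cons_val_zero, Matrix.cons_val_one,
        Matrix.head_cons, Matrix.cons_val_two, Matrix.tail_cons, Matrix.vecHead, Matrix.vecTail]
    have hb2e : b 2 = s • e := by
      rw [hb, he2]
      simp [Fin.sum_univ_three, Matrix.cons_val_zero, Matrix.cons_val_one,
        Matrix.head_cons, Matrix.cons_val_two, Matrix.tail_cons, Matrix.vecHead, Matrix.vecTail,
        smul_smul]
    obtain ⟨hφ0, hφ1, hφ2⟩ := phiR_b b
    have t00 : mul (b 0) (b 0) = b 2 := by
      rw [hb0e, LinearMap.map_smul₂, map_smul, m00, smul_smul, smul_smul, ha2, hb2e]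
    have t11 : mul (b 1) (b 1) = b 2 := by
      rw [hb1e, LinearMap.map_smul₂, map_smul, m11, smul_smul, smul_smul, hb2', hb2e]
    have t01 : mul (b 0) (b 1) = 0 := by
      rw [hb0e, hb1e, LinearMap.map_smul₂, map_smul, m01, smul_zero, smul_zero]
    have t10 : mul (b 1) (b 0) = 0 := by
      rw [hb0e, hb1e, LinearMap.map_smul₂, map_smul, m10, smul_zero, smul_zero]
    have t02 : mul (b 0) (b 2) = 0 := by
      rw [hb2e, map_smul, me, smul_zero]
    have t12 : mul (b 1) (b 2) = 0 := by
      rw [hb2e, map_smul, me, smul_zero]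
    have t20 : mul (b 2) (b 0) = 0 := by
      rw [hb2e, LinearMap.map_smul₂, me', smul_zero]
    have t21 : mul (b 2) (b 1) = 0 := by
      rw [hb2e, LinearMap.map_smul₂, me', smul_zero]
    have t22 : mul (b 2) (b 2) = 0 := by
      rw [hb2e, LinearMap.map_smul₂, me', smul_zero]
    apply isoTo_of_table mul mulJ24 M24 (fun x y => rfl) b <;>
      simp only [t00, t01, t10, t11, t02, t20, t12, t21, t22, hφ0, hφ1, hφ2, map_zero] <;>
      norm_num [mulJ24, Prod.ext_iff]
  · -- opposite sign: J26
    right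
    have hsd1ne : s * d1 ≠ 0 := mul_ne_zero hs0 hd1
    have hneg : 0 < -(s * d1) := by
      rcases lt_trichotomy (s * d1) 0 with h | h | h
      · linarith
      · exact absurd h hsd1ne
      · exact absurd h hpos
    set bb : ℝ := (Real.sqrt (-(s * d1)))⁻¹ with hbdef
    have hsqb : Real.sqrt (-(s * d1)) * Real.sqrt (-(s * d1)) = -(s * d1) :=
      Real.mul_self_sqrt hneg.le
    have hsqbne : Real.sqrt (-(s * d1)) ≠ 0 := ne_of_gt (Real.sqrt_pos.mpr hneg)
    have hb0 : bb ≠ 0 := inv_ne_zero hsqbne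
    have hb1' : bb * bb * (-(s * d1)) = 1 := by rw [hbdef, ← hsqb]; field_simp; rw [Real.sq_sqrt hneg.le, Real.sq_sqrt hneg.le]
    have hb2' : bb * bb * d1 = -s := by
      have key2 : s * (bb * bb * d1) = s * (-s) := by linear_combination - hb1' + hss
      exact mul_left_cancel₀ hs0 key2
    obtain ⟨b, hb⟩ := basis_of_matrix v !![a, a/2, 0; bb, -bb/2, 0; 0,0,s * c 2]
      (by
        have hdet : (!![a, a/2, 0; bb, -bb/2, 0; 0,0,s * c 2]).det
            = -(a * bb * (s * c 2)) := by
          simp [Matrix.det_fin_three]; ring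
        rw [hdet]
        exact isUnit_iff_ne_zero.mpr (neg_ne_zero.mpr
          (mul_ne_zero (mul_ne_zero ha0 hb0) (mul_ne_zero hs0 hc2))))
    have hb0e : b 0 = a • v 0 + bb • v 1 := by
      rw [hb]
      simp [Fin.sum_univ_three, Matrix.cons_val_zero, Matrix.cons_val_one,
        Matrix.head_cons, Matrix.cons_val_two, Matrix.tail_cons, Matrix.vecHead, Matrix.vecTail]
    have hb1e : b 1 = (a/2) • v 0 + (-bb/2) • v 1 := by
      rw [hb]
      simp [Fin.sum_univ_three, Matrix.cons_val_zero, Matrix.cons_val_one,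
        Matrix.head_cons, Matrix.cons_val_two, Matrix.tail_cons, Matrix.vecHead, Matrix.vecTail]
    have hb2e : b 2 = s • e := by
      rw [hb, he2]
      simp [Fin.sum_univ_three, Matrix.cons_val_zero, Matrix.cons_val_one,
        Matrix.head_cons, Matrix.cons_val_two, Matrix.tail_cons, Matrix.vecHead, Matrix.vecTail,
        smul_smul]
    obtain ⟨hφ0, hφ1, hφ2⟩ := phiR_b b
    have t00 : mul (b 0) (b 0) = 0 := by
      rw [hb0e, key]
      have : a * a * d0 + bb * bb * d1 = 0 := by rw [ha2, hb2']; ring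
      rw [this, zero_smul]
    have t11 : mul (b 1) (b 1) = 0 := by
      rw [hb1e, key]
      have : a/2 * (a/2) * d0 + -bb/2 * (-bb/2) * d1 = 0 := by
        have h1 : a/2 * (a/2) * d0 = (a * a * d0)/4 := by ring
        have h2 : -bb/2 * (-bb/2) * d1 = (bb * bb * d1)/4 := by ring
        rw [h1, h2, ha2, hb2']; ring
      rw [this, zero_smul]
    have t01 : mul (b 0) (b 1) = b 2 := by
      rw [hb0e, hb1e, key, hb2e]
      have : a * (a/2) * d0 + bb * (-bb/2) * d1 = s := by
        have h1 : a * (a/2) * d0 = (a * a * d0)/2 := by ring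
        have h2 : bb * (-bb/2) * d1 = -((bb * bb * d1)/2) := by ring
        rw [h1, h2, ha2, hb2']; ring
      rw [this]
    have t10 : mul (b 1) (b 0) = b 2 := by
      rw [hb0e, hb1e, key, hb2e]
      have : a/2 * a * d0 + -bb/2 * bb * d1 = s := by
        have h1 : a/2 * a * d0 = (a * a * d0)/2 := by ring
        have h2 : -bb/2 * bb * d1 = -((bb * bb * d1)/2) := by ring
        rw [h1, h2, ha2, hb2']; ring
      rw [this]
    have t02 : mul (b 0) (b 2) = 0 := by
      rw [hb2e, map_smul, me, smul_zero]
    have t12 : mul (b 1) (b 2) = 0 := by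
      rw [hb2e, map_smul, me, smul_zero]
    have t20 : mul (b 2) (b 0) = 0 := by
      rw [hb2e, LinearMap.map_smul₂, me', smul_zero]
    have t21 : mul (b 2) (b 1) = 0 := by
      rw [hb2e, LinearMap.map_smul₂, me', smul_zero]
    have t22 : mul (b 2) (b 2) = 0 := by
      rw [hb2e, LinearMap.map_smul₂, me', smul_zero]
    apply isoTo_of_table mul mulJ26 M26 (fun x y => rfl) b <;>
      simp only [t00, t01, t10, t11, t02, t20, t12, t21, t22, hφ0, hφ1, hφ2, map_zero] <;>
      norm_num [mulJ26, Prod.ext_iff]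

lemma e001 : ((0:ℝ),(0:ℝ),(1:ℝ)) ≠ (0 : ℝ×ℝ×ℝ) := by
  simp [Prod.ext_iff]

lemma not_24_25 : ¬ AlgebrasIso mulJ24 mulJ25 := by
  rintro ⟨φ, h⟩
  set p := φ (1,0,0) with hp
  set q := φ (0,1,0) with hq
  have e1 : mulJ24 (1,0,0) (1,0,0) = ((0:ℝ),(0:ℝ),(1:ℝ)) := by
    simp [mulJ24]
  have e2 : mulJ24 (0,1,0) (0,1,0) = ((0:ℝ),(0:ℝ),(1:ℝ)) := by
    simp [mulJ24]
  have e3 : mulJ24 (1,0,0) (0,1,0) = (0 : ℝ×ℝ×ℝ) := by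
    simp [mulJ24, Prod.ext_iff]
  have hx := h (1,0,0) (1,0,0); rw [e1, ← hp] at hx
  have hy := h (0,1,0) (0,1,0); rw [e2, ← hq] at hy
  have hxy := h (1,0,0) (0,1,0); rw [e3, map_zero, ← hp, ← hq] at hxy
  have hpq : p.1 * q.1 = 0 := (congrArg (fun z => z.2.1) hxy).symm
  rcases mul_eq_zero.mp hpq with h0 | h0
  · have : φ (0,0,1) = 0 := by rw [hx]; simp [mulJ25, h0]
    have hz : φ ((0:ℝ),(0:ℝ),(1:ℝ)) = φ (0:ℝ×ℝ×ℝ) := by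
      rw [this]; exact (map_zero φ).symm
    exact e001 (φ.injective hz)
  · have : φ (0,0,1) = 0 := by rw [hy]; simp [mulJ25, h0]
    have hz : φ ((0:ℝ),(0:ℝ),(1:ℝ)) = φ (0:ℝ×ℝ×ℝ) := by
      rw [this]; exact (map_zero φ).symm
    exact e001 (φ.injective hz)

lemma not_24_26 : ¬ AlgebrasIso mulJ24 mulJ26 := by
  rintro ⟨φ, h⟩
  set x := φ.symm (1,0,0) with hxd
  set y := φ.symm (0,1,0) with hyd
  have hxx := h x x
  have hxy := h x y
  simp only [hxd, hyd, φ.apply_symm_apply] at hxx hxy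
  have h1 : mulJ26 ((1:ℝ),(0:ℝ),(0:ℝ)) (1,0,0) = 0 := by simp [mulJ26, Prod.ext_iff]
  have h2 : mulJ26 ((1:ℝ),(0:ℝ),(0:ℝ)) (0,1,0) = ((0:ℝ),(0:ℝ),(1:ℝ)) := by simp [mulJ26]
  rw [h1] at hxx
  have hx0 : mulJ24 x x = 0 := φ.injective (by rw [hxx, map_zero])
  have hc : x.1 * x.1 + x.2.1 * x.2.1 = 0 := congrArg (fun z => z.2.2) hx0
  have ha : x.1 = 0 := by nlinarith
  have hb : x.2.1 = 0 := by nlinarith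
  have : mulJ24 x y = 0 := by simp [mulJ24, ha, hb, Prod.ext_iff]
  rw [this, map_zero, h2] at hxy
  exact e001 hxy.symm

lemma not_25_26 : ¬ AlgebrasIso mulJ25 mulJ26 := by
  rintro ⟨φ, h⟩
  set x := φ.symm (1,0,0) with hxd
  set y := φ.symm (0,1,0) with hyd
  have hxx := h x x
  have hxy := h x y
  simp only [hxd, hyd, φ.apply_symm_apply] at hxx hxy
  have h1 : mulJ26 ((1:ℝ),(0:ℝ),(0:ℝ)) (1,0,0) = 0 := by simp [mulJ26, Prod.ext_iff]
  have h2 : mulJ26 ((1:ℝ),(0:ℝ),(0:ℝ)) (0,1,0) = ((0:ℝ),(0:ℝ),(1:ℝ)) := by simp [mulJ26]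
  rw [h1] at hxx
  have hx0 : mulJ25 x x = 0 := φ.injective (by rw [hxx, map_zero])
  have hc : x.1 * x.1 = 0 := congrArg (fun z => z.2.1) hx0
  have ha : x.1 = 0 := by nlinarith
  have : mulJ25 x y = 0 := by simp [mulJ25, ha, Prod.ext_iff]
  rw [this, map_zero, h2] at hxy
  exact e001 hxy.symm

/-- every 3-dimensional nilpotent commutative real Jordan algebra
of nilpotency type (2,1) (J³ = 0, dim J² = 1) is isomorphic to exactly one of
J₂₄, J₂₅, J₂₆; in particular these three are pairwise non-isomorphic. -/
theorem nilpotent_type_21_classification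
    {J : Type*} [AddCommGroup J] [Module ℝ J] [FiniteDimensional ℝ J]
    (mul : J →ₗ[ℝ] J →ₗ[ℝ] J)
    (comm : ∀ x y : J, mul x y = mul y x)
    (jordan : ∀ x y : J, mul (mul (mul x x) y) x = mul (mul x x) (mul y x))
    (hdim : Module.finrank ℝ J = 3)
    (hJ3 : ∀ x y z : J, mul (mul x y) z = 0)
    (hJ2 : Module.finrank ℝ ↥(Submodule.span ℝ {z : J | ∃ x y, z = mul x y}) = 1) :
    (IsoTo mul mulJ24 ∨ IsoTo mul mulJ25 ∨ IsoTo mul mulJ26) ∧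
    ¬ AlgebrasIso mulJ24 mulJ25 ∧
    ¬ AlgebrasIso mulJ24 mulJ26 ∧
    ¬ AlgebrasIso mulJ25 mulJ26 := by
  refine ⟨?_, not_24_25, not_24_26, not_25_26⟩
  classical
  set S : Submodule ℝ J := Submodule.span ℝ {z : J | ∃ x y, z = mul x y} with hSdef
  have hmem : ∀ x y : J, mul x y ∈ S := fun x y => Submodule.subset_span ⟨x, y, rfl⟩
  obtain ⟨bS⟩ : Nonempty (Module.Basis (Fin 1) ℝ S) := ⟨Module.finBasisOfFinrankEq ℝ S hJ2⟩
  set e : J := (bS 0 : J) with hedef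
  have he0 : e ≠ 0 := by
    intro h
    exact bS.ne_zero 0 (Subtype.ext h)
  have hrepr : ∀ t : S, t = bS.repr t 0 • bS 0 := by
    intro t
    have h := bS.sum_repr t
    rw [Fin.sum_univ_one] at h
    exact h.symm
  set Bf : J →ₗ[ℝ] J →ₗ[ℝ] ℝ := LinearMap.mk₂ ℝ (fun x y => bS.repr ⟨mul x y, hmem x y⟩ 0)
    (fun m1 m2 n => by
      have h : (⟨mul (m1 + m2) n, hmem _ _⟩ : S) = ⟨mul m1 n, hmem _ _⟩ + ⟨mul m2 n, hmem _ _⟩ :=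
        Subtype.ext (by simp)
      beta_reduce; rw [h, map_add]; simp)
    (fun cc m n => by
      have h : (⟨mul (cc • m) n, hmem _ _⟩ : S) = cc • (⟨mul m n, hmem _ _⟩ : S) :=
        Subtype.ext (by simp)
      beta_reduce; rw [h, map_smul]; simp)
    (fun m n1 n2 => by
      have h : (⟨mul m (n1 + n2), hmem _ _⟩ : S) = ⟨mul m n1, hmem _ _⟩ + ⟨mul m n2, hmem _ _⟩ :=
        Subtype.ext (by simp)
      beta_reduce; rw [h, map_add]; simp)
    (fun cc m n => by
      have h : (⟨mul m (cc • n), hmem _ _⟩ : S) = cc • (⟨mul m n, hmem _ _⟩ : S) :=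
        Subtype.ext (by simp)
      beta_reduce; rw [h, map_smul]; simp)
    with hBfdef
  have hBf : ∀ x y, Bf x y = bS.repr ⟨mul x y, hmem x y⟩ 0 := fun x y => rfl
  have hBe : ∀ x y, mul x y = Bf x y • e := by
    intro x y
    have h := hrepr ⟨mul x y, hmem x y⟩
    have h2 := congrArg (fun t : S => (t : J)) h
    simpa [hBf] using h2
  have hml : ∀ y, mul e y = 0 := by
    intro y
    have hsub : S ≤ LinearMap.ker (mul.flip y) := by
      rw [hSdef]
      apply Submodule.span_le.mpr
      rintro z ⟨x1, y1, rfl⟩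
      simp only [SetLike.mem_coe, LinearMap.mem_ker, LinearMap.flip_apply]
      exact hJ3 x1 y1 y
    have hmS : e ∈ S := (bS 0).2
    have hm := hsub hmS
    simpa only [LinearMap.mem_ker, LinearMap.flip_apply] using hm
  have hmr : ∀ x, mul x e = 0 := fun x => by rw [comm]; exact hml x
  have hradl : ∀ y, Bf e y = 0 := by
    intro y
    have h := hBe e y
    rw [hml y] at h
    exact ((smul_eq_zero.mp h.symm).resolve_right he0)
  have hradr : ∀ y, Bf y e = 0 := by
    intro y
    have h := hBe y e
    rw [hmr y] at h
    exact ((smul_eq_zero.mp h.symm).resolve_right he0)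
  have hBsymm : Bf.IsSymm := by
    rw [LinearMap.isSymm_def]
    intro x y
    have h : (⟨mul x y, hmem x y⟩ : S) = ⟨mul y x, hmem y x⟩ := Subtype.ext (comm x y)
    simp [hBf, h]
  haveI : Invertible (2:ℝ) := invertibleOfNonzero two_ne_zero
  obtain ⟨v₀, hv₀⟩ := LinearMap.BilinForm.exists_orthogonal_basis hBsymm
  set v : Module.Basis (Fin 3) ℝ J := v₀.reindex (finCongr hdim) with hvdef
  have hortho : ∀ i j : Fin 3, i ≠ j → Bf (v i) (v j) = 0 := by
    intro i j hij
    rw [hvdef]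
    simp only [Module.Basis.reindex_apply]
    exact (LinearMap.isOrthoᵢ_def.mp hv₀) _ _ (fun h => hij ((finCongr hdim).symm.injective h))
  have hcd : ∀ j : Fin 3, v.repr e j * Bf (v j) (v j) = 0 := fun j => by
    have h := repr_mul_diag Bf v hortho e j
    rw [hradl] at h
    exact h.symm
  have hnotall : ¬(Bf (v 0) (v 0) = 0 ∧ Bf (v 1) (v 1) = 0 ∧ Bf (v 2) (v 2) = 0) := by
    rintro ⟨h0, h1, h2⟩
    have hvv : ∀ i j : Fin 3, Bf (v i) (v j) = 0 := by
      intro i j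
      by_cases hij : i = j
      · subst hij; fin_cases i
        exacts [h0, h1, h2]
      · exact hortho i j hij
    have hB0 : Bf = 0 := by
      apply v.ext; intro i; apply v.ext; intro j
      simp [hvv i j]
    have hmul0 : ∀ x y : J, mul x y = 0 := by
      intro x y; rw [hBe, hB0]; simp
    have hSbot : S = ⊥ := by
      rw [hSdef, eq_bot_iff]
      apply Submodule.span_le.mpr
      rintro z ⟨x, y, rfl⟩
      simp [hmul0]
    rw [hSbot] at hJ2
    simp at hJ2
  have hnotnone : ¬(Bf (v 0) (v 0) ≠ 0 ∧ Bf (v 1) (v 1) ≠ 0 ∧ Bf (v 2) (v 2) ≠ 0) := by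
    rintro ⟨h0, h1, h2⟩
    apply he0
    have hcall : ∀ j : Fin 3, v.repr e j = 0 := by
      intro j
      rcases mul_eq_zero.mp (hcd j) with h' | h'
      · exact h'
      · exfalso
        revert h'
        fin_cases j
        exacts [h0, h1, h2]
    rw [← v.sum_repr e]
    simp [hcall]
  by_cases h0 : Bf (v 0) (v 0) = 0 <;> by_cases h1 : Bf (v 1) (v 1) = 0 <;>
    by_cases h2 : Bf (v 2) (v 2) = 0
  · exact absurd ⟨h0, h1, h2⟩ hnotall
  · -- only d2 ≠ 0 : J25 via swap 0 2
    have e0 : (v.reindex (Equiv.swap 0 2)) 0 = v 2 := by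
      rw [Module.Basis.reindex_apply]; congr 1
    have e1 : (v.reindex (Equiv.swap 0 2)) 1 = v 1 := by
      rw [Module.Basis.reindex_apply]; congr 1
    have e2 : (v.reindex (Equiv.swap 0 2)) 2 = v 0 := by
      rw [Module.Basis.reindex_apply]; congr 1
    refine Or.inr (Or.inl (caseA mul Bf e hBe he0 hradl hradr (v.reindex (Equiv.swap 0 2))
      (fun i j hij => by
        simp only [Module.Basis.reindex_apply]
        exact hortho _ _ (fun h => hij ((Equiv.swap (0:Fin 3) 2).symm.injective h)))
      ?_ ?_ ?_))
    · rw [e0]; exact h2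
    · rw [e1]; exact h1
    · rw [e2]; exact h0
  · -- only d1 ≠ 0 : J25 via swap 0 1
    have e0 : (v.reindex (Equiv.swap 0 1)) 0 = v 1 := by
      rw [Module.Basis.reindex_apply]; congr 1
    have e1 : (v.reindex (Equiv.swap 0 1)) 1 = v 0 := by
      rw [Module.Basis.reindex_apply]; congr 1
    have e2 : (v.reindex (Equiv.swap 0 1)) 2 = v 2 := by
      rw [Module.Basis.reindex_apply]; congr 1
    refine Or.inr (Or.inl (caseA mul Bf e hBe he0 hradl hradr (v.reindex (Equiv.swap 0 1))
      (fun i j hij => by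
        simp only [Module.Basis.reindex_apply]
        exact hortho _ _ (fun h => hij ((Equiv.swap (0:Fin 3) 1).symm.injective h)))
      ?_ ?_ ?_))
    · rw [e0]; exact h1
    · rw [e1]; exact h0
    · rw [e2]; exact h2
  · -- d1, d2 ≠ 0 : caseB via swap 0 2
    have e0 : (v.reindex (Equiv.swap 0 2)) 0 = v 2 := by
      rw [Module.Basis.reindex_apply]; congr 1
    have e1 : (v.reindex (Equiv.swap 0 2)) 1 = v 1 := by
      rw [Module.Basis.reindex_apply]; congr 1
    have e2 : (v.reindex (Equiv.swap 0 2)) 2 = v 0 := by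
      rw [Module.Basis.reindex_apply]; congr 1
    have hres := caseB mul Bf e hBe he0 hradl hradr (v.reindex (Equiv.swap 0 2))
      (fun i j hij => by
        simp only [Module.Basis.reindex_apply]
        exact hortho _ _ (fun h => hij ((Equiv.swap (0:Fin 3) 2).symm.injective h)))
      (by rw [e0]; exact h2) (by rw [e1]; exact h1) (by rw [e2]; exact h0)
    rcases hres with h | h
    · exact Or.inl h
    · exact Or.inr (Or.inr h)
  · -- only d0 ≠ 0 : caseA with v
    exact Or.inr (Or.inl (caseA mul Bf e hBe he0 hradl hradr v hortho h0 h1 h2))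
  · -- d0, d2 ≠ 0 : caseB via swap 1 2
    have e0 : (v.reindex (Equiv.swap 1 2)) 0 = v 0 := by
      rw [Module.Basis.reindex_apply]; congr 1
    have e1 : (v.reindex (Equiv.swap 1 2)) 1 = v 2 := by
      rw [Module.Basis.reindex_apply]; congr 1
    have e2 : (v.reindex (Equiv.swap 1 2)) 2 = v 1 := by
      rw [Module.Basis.reindex_apply]; congr 1
    have hres := caseB mul Bf e hBe he0 hradl hradr (v.reindex (Equiv.swap 1 2))
      (fun i j hij => by
        simp only [Module.Basis.reindex_apply]
        exact hortho _ _ (fun h => hij ((Equiv.swap (1:Fin 3) 2).symm.injective h)))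
      (by rw [e0]; exact h0) (by rw [e1]; exact h2) (by rw [e2]; exact h1)
    rcases hres with h | h
    · exact Or.inl h
    · exact Or.inr (Or.inr h)
  · -- d0, d1 ≠ 0 : caseB with v
    have hres := caseB mul Bf e hBe he0 hradl hradr v hortho h0 h1 h2
    rcases hres with h | h
    · exact Or.inl h
    · exact Or.inr (Or.inr h)
  · exact absurd ⟨h0, h1, h2⟩ hnotnone
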